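/- For the quiver ·_1 → ·_2 (type A_2), the rooted mutation group is the group of order 2 generated by μ_{[12]} = μ_1 μ_2 μ_1 μ_2 μ_1, and μ_{[12]} and μ_{[21]} = μ_2 μ_1 μ_2 μ_1 μ_2 act identically on every seed of this cluster pattern. -/

import Mathlib

/-- Fomin–Zelevinsky matrix mutation at index `k`. -/
def mutate {n : ℕ} (k : Fin n) (B : Matrix (Fin n) (Fin n) ℤ) : Matrix (Fin n) (Fin n) ℤ :=
  Matrix.of fun i j =>
    if i = k ∨ j = k then -B i j
    else B i j + Int.sign (B i k) * max 0 (B i k * B k j)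

/-- `B` is skew-symmetrizable: there is a positive diagonal `d` with `dᵢ bᵢⱼ = -dⱼ bⱼᵢ`. -/
def IsSkewSymmetrizable {n : ℕ} (B : Matrix (Fin n) (Fin n) ℤ) : Prop :=
  ∃ d : Fin n → ℤ, (∀ i, 0 < d i) ∧ ∀ i j, d i * B i j = -(d j * B j i)

/-- The exchange relation: the new cluster variable obtained by mutating the
cluster `x` with exchange matrix `B` at index `k`. -/
noncomputable def exch {n : ℕ} {F : Type*} [Field F] (B : Matrix (Fin n) (Fin n) ℤ)
    (k : Fin n) (x : Fin n → F) : F :=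
  ((∏ j, x j ^ (B j k).toNat) + ∏ j, x j ^ (-B j k).toNat) / x k

/-- Seed mutation at index `k`: exchange relation on the cluster, matrix mutation on `B`. -/
noncomputable def seedMut {n : ℕ} {F : Type*} [Field F] (k : Fin n)
    (s : (Fin n → F) × Matrix (Fin n) (Fin n) ℤ) :
    (Fin n → F) × Matrix (Fin n) (Fin n) ℤ :=
  (Function.update s.1 k (exch s.2 k s.1), mutate k s.2)

/-- Action of a mutation sequence (list in order of application, leftmost first). -/
noncomputable def seqAct {n : ℕ} {F : Type*} [Field F] (l : List (Fin n))
    (s : (Fin n → F) × Matrix (Fin n) (Fin n) ℤ) :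
    (Fin n → F) × Matrix (Fin n) (Fin n) ℤ :=
  l.foldl (fun t k => seedMut k t) s

/-- The relabelling action of a permutation on seeds. -/
def permSeed {n : ℕ} {F : Type*} [Field F] (σ : Equiv.Perm (Fin n))
    (s : (Fin n → F) × Matrix (Fin n) (Fin n) ℤ) :
    (Fin n → F) × Matrix (Fin n) (Fin n) ℤ :=
  (fun i => s.1 (σ.symm i), Matrix.of fun i j => s.2 (σ.symm i) (σ.symm j))

def Pm : Matrix (Fin 2) (Fin 2) ℤ := !![0,1;-1,0]
def Nm : Matrix (Fin 2) (Fin 2) ℤ := !![0,-1;1,0]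

lemma negP : -Pm = Nm := by ext i j; fin_cases i <;> fin_cases j <;> rfl
lemma negN : -Nm = Pm := by ext i j; fin_cases i <;> fin_cases j <;> rfl

lemma mutP (k : Fin 2) : mutate k Pm = -Pm := by
  ext i j; fin_cases k <;> fin_cases i <;> fin_cases j <;> simp [mutate, Pm] <;> decide
lemma mutN (k : Fin 2) : mutate k Nm = -Nm := by
  ext i j; fin_cases k <;> fin_cases i <;> fin_cases j <;> simp [mutate, Nm] <;> decide

lemma m0 {F : Type*} [Field F] (u v : F) (B : Matrix (Fin 2) (Fin 2) ℤ)
    (hB : B = Pm ∨ B = Nm) :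
    seedMut 0 (![u,v], B) = (![(1+v)/u, v], -B) := by
  unfold seedMut
  refine Prod.ext ?_ ?_
  · show Function.update ![u,v] 0 (exch B 0 ![u,v]) = _
    have : exch B 0 ![u,v] = (1+v)/u := by
      rcases hB with rfl | rfl <;>
        simp [exch, Fin.prod_univ_two, Pm, Nm] <;> ring
    rw [this]; funext i; fin_cases i <;> simp
  · show mutate 0 B = -B
    rcases hB with rfl | rfl
    · exact mutP 0
    · exact mutN 0

lemma m1 {F : Type*} [Field F] (u v : F) (B : Matrix (Fin 2) (Fin 2) ℤ)
    (hB : B = Pm ∨ B = Nm) :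
    seedMut 1 (![u,v], B) = (![u, (1+u)/v], -B) := by
  unfold seedMut
  refine Prod.ext ?_ ?_
  · show Function.update ![u,v] 1 (exch B 1 ![u,v]) = _
    have : exch B 1 ![u,v] = (1+u)/v := by
      rcases hB with rfl | rfl <;>
        simp [exch, Fin.prod_univ_two, Pm, Nm] <;> ring
    rw [this]; funext i; fin_cases i <;> simp
  · show mutate 1 B = -B
    rcases hB with rfl | rfl
    · exact mutP 1
    · exact mutN 1

lemma negneg (B : Matrix (Fin 2) (Fin 2) ℤ) (hB : B = Pm ∨ B = Nm) :
  -B = Pm ∨ -B = Nm := by rcases hB with rfl | rfl; exact Or.inr negP; exact Or.inl negN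

lemma quint12 {F : Type*} [Field F] (u v : F) (hu : u ≠ 0) (hv : v ≠ 0)
    (hu1 : (1:F)+u ≠ 0) (hv1 : (1:F)+v ≠ 0) (huv : (1:F)+u+v ≠ 0)
    (B : Matrix (Fin 2) (Fin 2) ℤ) (hB : B = Pm ∨ B = Nm) :
    seqAct [0,1,0,1,0] (![u,v], B) = (![v,u], -B) := by
  have e1 : (1:F) + (1+v)/u = (1+u+v)/u := by field_simp; ring
  have e2 : (1:F) + (1+u+v)/(u*v) = ((1+u)*(1+v))/(u*v) := by field_simp; ring
  have h1 : seqAct [0,1,0,1,0] (![u,v], B)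
      = seedMut 0 (seedMut 1 (seedMut 0 (seedMut 1 (seedMut 0 (![u,v], B))))) := rfl
  rw [h1, m0 u v B hB, m1 _ _ _ (negneg B hB)]
  have c2 : (1:F) + (1+v)/u = (1+u+v)/u := e1
  rw [show ((1:F)+((1+v)/u))/v = (1+u+v)/(u*v) by rw [e1, div_div]]
  rw [m0 _ _ _ (negneg _ (negneg B hB))]
  rw [show ((1:F)+(1+u+v)/(u*v))/((1+v)/u) = (1+u)/v by
    rw [e2]; field_simp]
  rw [m1 _ _ _ (negneg _ (negneg _ (negneg B hB)))]
  rw [show ((1:F)+(1+u)/v)/((1+u+v)/(u*v)) = u by field_simp; ring]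
  rw [m0 _ _ _ (negneg _ (negneg _ (negneg _ (negneg B hB))))]
  rw [show ((1:F)+u)/((1+u)/v) = v by field_simp]
  simp

lemma quint21 {F : Type*} [Field F] (u v : F) (hu : u ≠ 0) (hv : v ≠ 0)
    (hu1 : (1:F)+u ≠ 0) (hv1 : (1:F)+v ≠ 0) (huv : (1:F)+u+v ≠ 0)
    (B : Matrix (Fin 2) (Fin 2) ℤ) (hB : B = Pm ∨ B = Nm) :
    seqAct [1,0,1,0,1] (![u,v], B) = (![v,u], -B) := by
  have h1 : seqAct [1,0,1,0,1] (![u,v], B)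
      = seedMut 1 (seedMut 0 (seedMut 1 (seedMut 0 (seedMut 1 (![u,v], B))))) := rfl
  rw [h1, m1 u v B hB, m0 _ _ _ (negneg B hB)]
  rw [show ((1:F)+((1+u)/v))/u = (1+u+v)/(u*v) by field_simp; ring]
  rw [m1 _ _ _ (negneg _ (negneg B hB))]
  rw [show ((1:F)+(1+u+v)/(u*v))/((1+u)/v) = (1+v)/u by field_simp; ring]
  rw [m0 _ _ _ (negneg _ (negneg _ (negneg B hB)))]
  rw [show ((1:F)+(1+v)/u)/((1+u+v)/(u*v)) = v by field_simp; ring]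
  rw [m1 _ _ _ (negneg _ (negneg _ (negneg _ (negneg B hB))))]
  rw [show ((1:F)+v)/((1+v)/u) = u by field_simp]
  simp

def GoodSeed {F : Type*} [Field F] (s : (Fin 2 → F) × Matrix (Fin 2) (Fin 2) ℤ) : Prop :=
  ∃ u v, (s.2 = Pm ∨ s.2 = Nm) ∧ s.1 = ![u,v] ∧
    u ≠ 0 ∧ v ≠ 0 ∧ (1:F)+u ≠ 0 ∧ (1:F)+v ≠ 0 ∧ (1:F)+u+v ≠ 0

lemma good_step {F : Type*} [Field F] (s : (Fin 2 → F) × Matrix (Fin 2) (Fin 2) ℤ)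
    (hs : GoodSeed s) (k : Fin 2) : GoodSeed (seedMut k s) := by
  obtain ⟨u, v, hB, h1, hu, hv, hu1, hv1, huv⟩ := hs
  have hs' : s = (![u,v], s.2) := Prod.ext h1 rfl
  obtain rfl | rfl : k = 0 ∨ k = 1 := by omega
  · rw [hs', m0 u v s.2 hB]
    refine ⟨(1+v)/u, v, negneg _ hB, rfl, div_ne_zero hv1 hu, hv, ?_, hv1, ?_⟩
    · rw [show (1:F)+(1+v)/u = (1+u+v)/u by field_simp; ring]
      exact div_ne_zero huv hu
    · rw [show (1:F)+(1+v)/u+v = ((1+u)*(1+v))/u by field_simp; ring]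
      exact div_ne_zero (mul_ne_zero hu1 hv1) hu
  · rw [hs', m1 u v s.2 hB]
    refine ⟨u, (1+u)/v, negneg _ hB, rfl, hu, div_ne_zero hu1 hv, hu1, ?_, ?_⟩
    · rw [show (1:F)+(1+u)/v = (1+u+v)/v by field_simp; ring]
      exact div_ne_zero huv hv
    · rw [show (1:F)+u+(1+u)/v = ((1+u)*(1+v))/v by field_simp; ring]
      exact div_ne_zero (mul_ne_zero hu1 hv1) hv

/-- For the quiver `·₁ → ·₂` (type `A₂`), the rooted mutation group is the group of
order two generated by `μ_{[12]} = μ₁μ₂μ₁μ₂μ₁`: this element squares to the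
identity on the initial seed, acts nontrivially (by the transposition of the two
indices) on the initial seed, and agrees with `μ_{[21]} = μ₂μ₁μ₂μ₁μ₂` on every
seed of the cluster pattern. -/
theorem a2_rooted_mutation_group {F : Type*} [Field F] [Algebra ℚ F]
    (x : Fin 2 → F) (hx : AlgebraicIndependent ℚ x) :
    let s₀ : (Fin 2 → F) × Matrix (Fin 2) (Fin 2) ℤ := (x, !![0, 1; -1, 0])
    let l12 : List (Fin 2) := [0, 1, 0, 1, 0]
    let l21 : List (Fin 2) := [1, 0, 1, 0, 1]
    seqAct (l12 ++ l12) s₀ = s₀ ∧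
      seqAct l12 s₀ = permSeed (Equiv.swap 0 1) s₀ ∧
      seqAct l12 s₀ ≠ s₀ ∧
      ∀ l : List (Fin 2), seqAct l12 (seqAct l s₀) = seqAct l21 (seqAct l s₀) := by
  intro s₀ l12 l21
  -- nonvanishing facts
  have key : ∀ p : MvPolynomial (Fin 2) ℚ,
      MvPolynomial.eval (fun _ => (1:ℚ)) p ≠ 0 → MvPolynomial.aeval x p ≠ 0 := by
    intro p hp h0
    have : p = 0 := by
      exact hx (by simpa using h0)
    rw [this] at hp; simp at hp
  have hu : x 0 ≠ 0 := by
    have := key (MvPolynomial.X 0) (by simp)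
    simpa using this
  have hv : x 1 ≠ 0 := by
    have := key (MvPolynomial.X 1) (by simp)
    simpa using this
  have hu1 : (1:F) + x 0 ≠ 0 := by
    have := key (1 + MvPolynomial.X 0) (by norm_num)
    simpa using this
  have hv1 : (1:F) + x 1 ≠ 0 := by
    have := key (1 + MvPolynomial.X 1) (by norm_num)
    simpa using this
  have huv : (1:F) + x 0 + x 1 ≠ 0 := by
    have := key (1 + MvPolynomial.X 0 + MvPolynomial.X 1) (by norm_num)
    simpa using this
  have hvu : (1:F) + x 1 + x 0 ≠ 0 := by
    rw [add_right_comm]; exact huv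
  have hxv : x = ![x 0, x 1] := by funext i; fin_cases i <;> rfl
  have hs0 : s₀ = (![x 0, x 1], Pm) := by rw [Prod.ext_iff]; exact ⟨hxv, rfl⟩
  have h12 : seqAct l12 s₀ = (![x 1, x 0], Nm) := by
    rw [hs0, quint12 _ _ hu hv hu1 hv1 huv Pm (Or.inl rfl), negP]
  refine ⟨?_, ?_, ?_, ?_⟩
  · show seqAct (l12 ++ l12) s₀ = s₀
    rw [show seqAct (l12 ++ l12) s₀ = seqAct l12 (seqAct l12 s₀) from List.foldl_append .. , h12,
      quint12 _ _ hv hu hv1 hu1 hvu Nm (Or.inr rfl), negN, hs0]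
  · rw [h12]
    refine Prod.ext ?_ ?_
    · funext i; fin_cases i <;> simp [permSeed, s₀]
    · show Nm = Matrix.of fun i j => s₀.2 ((Equiv.swap 0 1).symm i) ((Equiv.swap 0 1).symm j)
      ext i j; fin_cases i <;> fin_cases j <;> simp [Nm, s₀] <;> rfl
  · rw [h12]
    intro h
    have h2 := congrArg (fun t => t.2 0 1) h
    simp [Nm, s₀] at h2
  · intro l
    have hg : GoodSeed (seqAct l s₀) := by
      induction l using List.reverseRecOn with
      | nil =>
        exact ⟨x 0, x 1, Or.inl rfl, hxv, hu, hv, hu1, hv1, huv⟩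
      | append_singleton l k ih =>
        have : seqAct (l ++ [k]) s₀ = seedMut k (seqAct l s₀) := List.foldl_append ..
        rw [this]
        exact good_step _ ih k
    obtain ⟨u, v, hB, h1, hu', hv', hu1', hv1', huv'⟩ := hg
    have hs' : seqAct l s₀ = (![u,v], (seqAct l s₀).2) := Prod.ext h1 rfl
    rw [hs', quint12 _ _ hu' hv' hu1' hv1' huv' _ hB,
      quint21 _ _ hu' hv' hu1' hv1' huv' _ hB]
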